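/- Let α > 0. Then lim_{x→∞} v_α(x)/(x e^{-x}) = απ. -/

import Mathlib

open MeasureTheory Set Filter

/-- `F(x+iy) = ∫₀^∞ t e^{-t}/((x-t)² + y²) dt`. -/
noncomputable def Fint (x y : ℝ) : ℝ :=
  ∫ t in Set.Ioi (0:ℝ), t * Real.exp (-t) / ((x - t)^2 + y^2)

/-- `H_α(z) = z + α + α ∫₀^∞ t e^{-t}/(z-t) dt`. -/
noncomputable def Hfun (α : ℝ) (z : ℂ) : ℂ :=
  z + (α : ℂ) + (α : ℂ) * ∫ t in Set.Ioi (0:ℝ), ((t * Real.exp (-t) : ℝ) : ℂ) / (z - (t : ℂ))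

open Real

section FGVhelpers

lemma FGV_te_le (t : ℝ) (_ht : 0 ≤ t) : t * Real.exp (-t) ≤ 2 * Real.exp (-((1:ℝ)/2) * t) := by
  have h1 := Real.add_one_le_exp (t/2)
  have h2 : t ≤ 2 * Real.exp (t/2) := by nlinarith [Real.exp_pos (t/2)]
  calc t * Real.exp (-t) ≤ (2 * Real.exp (t/2)) * Real.exp (-t) :=
        mul_le_mul_of_nonneg_right h2 (Real.exp_pos _).le
    _ = 2 * Real.exp (-((1:ℝ)/2) * t) := by rw [mul_assoc, ← Real.exp_add]; ring_nf

lemma FGV_int_te : IntegrableOn (fun t : ℝ => t * Real.exp (-t)) (Ioi 0) := by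
  have h := exp_neg_integrableOn_Ioi 0 (by norm_num : (0:ℝ) < 1/2)
  refine (h.const_mul 2).mono' ?_ ?_
  · exact (measurable_id.mul (measurable_exp.comp measurable_neg)).aestronglyMeasurable
  · filter_upwards [ae_restrict_mem measurableSet_Ioi] with t ht
    rw [Real.norm_eq_abs, abs_of_nonneg (mul_nonneg (le_of_lt ht) (Real.exp_pos _).le)]
    exact FGV_te_le t (le_of_lt ht)

lemma FGV_int_te_val : (∫ t in Ioi (0:ℝ), t * Real.exp (-t)) ≤ 4 := by
  have h := exp_neg_integrableOn_Ioi 0 (by norm_num : (0:ℝ) < 1/2)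
  have hval : (∫ t in Ioi (0:ℝ), Real.exp (-(1/2) * t)) = 2 := by
    have := integral_comp_mul_left_Ioi (fun s => Real.exp (-s)) 0 (by norm_num : (0:ℝ) < 1/2)
    simp only [mul_zero, smul_eq_mul] at this
    rw [show (fun t : ℝ => Real.exp (-(1/2) * t)) = (fun t : ℝ => Real.exp (-(1/2 * t))) by ext t; ring_nf]
    rw [this, integral_exp_neg_Ioi_zero]
    norm_num
  calc (∫ t in Ioi (0:ℝ), t * Real.exp (-t)) ≤ ∫ t in Ioi (0:ℝ), 2 * Real.exp (-(1/2) * t) := by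
        refine setIntegral_mono_on FGV_int_te (h.const_mul 2) measurableSet_Ioi ?_
        exact fun t ht => FGV_te_le t (le_of_lt ht)
    _ = 4 := by rw [integral_const_mul, hval]; norm_num

lemma FGV_int_f (x y : ℝ) (hy : 0 < y) :
    IntegrableOn (fun t : ℝ => t * Real.exp (-t) / ((x - t)^2 + y^2)) (Ioi 0) := by
  refine (FGV_int_te.mul_const (y^2)⁻¹).mono' ?_ ?_
  · apply Measurable.aestronglyMeasurable
    apply (measurable_id.mul (measurable_exp.comp measurable_neg)).div
    fun_prop
  · filter_upwards [ae_restrict_mem measurableSet_Ioi] with t ht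
    have hd : (0:ℝ) < (x - t)^2 + y^2 := by positivity
    have h0 : 0 ≤ t * Real.exp (-t) := mul_nonneg (le_of_lt ht) (Real.exp_pos _).le
    rw [Real.norm_eq_abs, abs_of_nonneg (div_nonneg h0 hd.le)]
    rw [div_eq_mul_inv]
    apply mul_le_mul_of_nonneg_left _ h0
    apply inv_anti₀ (by positivity)
    nlinarith [sq_nonneg (x - t)]

lemma FGV_Fint_anti (x : ℝ) {y₁ y₂ : ℝ} (h1 : 0 < y₁) (h12 : y₁ ≤ y₂) :
    (∫ t in Ioi (0:ℝ), t * Real.exp (-t) / ((x - t)^2 + y₂^2)) ≤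
      ∫ t in Ioi (0:ℝ), t * Real.exp (-t) / ((x - t)^2 + y₁^2) := by
  have h2 : 0 < y₂ := lt_of_lt_of_le h1 h12
  refine setIntegral_mono_on (FGV_int_f x y₂ h2) (FGV_int_f x y₁ h1) measurableSet_Ioi ?_
  intro t ht
  have h0 : 0 ≤ t * Real.exp (-t) := mul_nonneg (le_of_lt ht) (Real.exp_pos _).le
  apply div_le_div_of_nonneg_left h0 (by positivity)
  · nlinarith

lemma FGV_poisson_rw (x y : ℝ) (hy : 0 < y) :
    (fun t : ℝ => ((x - t)^2 + y^2)⁻¹)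
      = fun t : ℝ => (y^2)⁻¹ * ((fun s : ℝ => (1 + s^2)⁻¹) ((t - x) / y)) := by
  ext t
  have hy2 : (y:ℝ)^2 ≠ 0 := by positivity
  field_simp
  ring

lemma FGV_poisson_integrable (x y : ℝ) (hy : 0 < y) :
    Integrable (fun t : ℝ => ((x - t)^2 + y^2)⁻¹) := by
  rw [FGV_poisson_rw x y hy]
  exact ((integrable_inv_one_add_sq.comp_div hy.ne').comp_sub_right x).const_mul _

lemma FGV_poisson_univ (x y : ℝ) (hy : 0 < y) :
    (∫ t : ℝ, ((x - t)^2 + y^2)⁻¹) = π / y := by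
  rw [FGV_poisson_rw x y hy]
  rw [integral_const_mul]
  have h1 : (∫ t : ℝ, (fun s : ℝ => (1 + s^2)⁻¹) ((t - x) / y))
      = ∫ t : ℝ, (fun s : ℝ => (1 + s^2)⁻¹) (t / y) :=
    integral_sub_right_eq_self (fun t : ℝ => (fun s : ℝ => (1 + s^2)⁻¹) (t / y)) x
  rw [h1, MeasureTheory.Measure.integral_comp_div (fun s : ℝ => (1 + s^2)⁻¹) y,
    integral_univ_inv_one_add_sq, abs_of_pos hy, smul_eq_mul]
  field_simp

lemma FGV_poisson_Ioo (x y δ : ℝ) (hy : 0 < y) (hδ : 0 < δ) :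
    (∫ t in Ioo (x - δ) (x + δ), ((x - t)^2 + y^2)⁻¹)
      = 2 / y * Real.arctan (δ / y) := by
  have hle : x - δ ≤ x + δ := by linarith
  rw [← MeasureTheory.integral_Ioc_eq_integral_Ioo, ← intervalIntegral.integral_of_le hle]
  have : ∀ t : ℝ, ((x - t)^2 + y^2)⁻¹
      = (y^2)⁻¹ * ((fun s : ℝ => (1 + s^2)⁻¹) ((t - x) / y)) := fun t => by
    have hy2 : (y:ℝ)^2 ≠ 0 := by positivity
    field_simp; ring
  simp_rw [this]
  rw [intervalIntegral.integral_const_mul]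
  rw [intervalIntegral.integral_comp_sub_right (fun s : ℝ => (1 + (s/y)^2)⁻¹) x]
  rw [intervalIntegral.integral_comp_div (fun u : ℝ => (1 + u^2)⁻¹) hy.ne']
  rw [integral_inv_one_add_sq]
  have h1 : x - δ - x = -δ := by ring
  have h2 : x + δ - x = δ := by ring
  rw [h1, h2, smul_eq_mul]
  rw [show -δ / y = -(δ/y) by ring, Real.arctan_neg]
  have hy2 : (y:ℝ)^2 ≠ 0 := by positivity
  field_simp
  ring

lemma FGV_Fint_lower (x y δ : ℝ) (hy : 0 < y) (hδ : 0 < δ) (hx : δ < x) :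
    ((x - δ) * Real.exp (-(x + δ))) * (2 / y * Real.arctan (δ / y))
      ≤ ∫ t in Ioi (0:ℝ), t * Real.exp (-t) / ((x - t)^2 + y^2) := by
  have hsub : Ioo (x - δ) (x + δ) ⊆ Ioi (0:ℝ) := by
    intro t ht; exact lt_trans (by linarith [ht.1] : (0:ℝ) < x - δ) ht.1 |>.trans_le le_rfl
  calc ((x - δ) * Real.exp (-(x + δ))) * (2 / y * Real.arctan (δ / y))
      = ∫ t in Ioo (x - δ) (x + δ), ((x - δ) * Real.exp (-(x + δ))) * ((x - t)^2 + y^2)⁻¹ := by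
        rw [integral_const_mul, FGV_poisson_Ioo x y δ hy hδ]
    _ ≤ ∫ t in Ioo (x - δ) (x + δ), t * Real.exp (-t) / ((x - t)^2 + y^2) := by
        refine setIntegral_mono_on
          (((FGV_poisson_integrable x y hy).integrableOn).const_mul _)
          ((FGV_int_f x y hy).mono_set hsub) measurableSet_Ioo ?_
        intro t ht
        have hD : (0:ℝ) < (x - t)^2 + y^2 := by positivity
        rw [div_eq_mul_inv]
        apply mul_le_mul_of_nonneg_right _ (inv_nonneg.2 hD.le)
        have h1 : x - δ ≤ t := le_of_lt ht.1
        have h2 : Real.exp (-(x + δ)) ≤ Real.exp (-t) := Real.exp_le_exp.2 (by linarith [ht.2])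
        exact mul_le_mul h1 h2 (Real.exp_pos _).le (by linarith)
    _ ≤ ∫ t in Ioi (0:ℝ), t * Real.exp (-t) / ((x - t)^2 + y^2) := by
        refine setIntegral_mono_set (FGV_int_f x y hy) ?_ (HasSubset.Subset.eventuallyLE hsub)
        filter_upwards [ae_restrict_mem measurableSet_Ioi] with t ht
        have hD : (0:ℝ) < (x - t)^2 + y^2 := by positivity
        exact div_nonneg (mul_nonneg (le_of_lt ht) (Real.exp_pos _).le) hD.le

lemma FGV_Fint_upper (x y δ : ℝ) (hy : 0 < y) (hδ : 0 < δ) (hx : 2*δ ≤ x) :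
    (∫ t in Ioi (0:ℝ), t * Real.exp (-t) / ((x - t)^2 + y^2))
      ≤ ((x + δ) * Real.exp (-(x - δ))) * (π / y) + 16/x^2 + 8*Real.exp (-(x/8))/δ^2 := by
  have hxpos : 0 < x := by linarith
  set M := (x + δ) * Real.exp (-(x - δ)) with hM
  have hMpos : 0 ≤ M := mul_nonneg (by linarith) (Real.exp_pos _).le
  have hint1 : IntegrableOn (fun t : ℝ => M * ((x - t)^2 + y^2)⁻¹) (Ioi 0) :=
    ((FGV_poisson_integrable x y hy).integrableOn).const_mul _
  have hint2 : IntegrableOn (fun t : ℝ => (4/x^2) * (t * Real.exp (-t))) (Ioi 0) :=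
    FGV_int_te.const_mul _
  have hint3 : IntegrableOn (fun t : ℝ => (2/δ^2) * Real.exp (-(x/8)) * Real.exp (-((1:ℝ)/4) * t)) (Ioi 0) :=
    (exp_neg_integrableOn_Ioi 0 (by norm_num : (0:ℝ) < 1/4)).const_mul _
  have hint23 : IntegrableOn (fun t : ℝ => (4/x^2) * (t * Real.exp (-t))
      + (2/δ^2) * Real.exp (-(x/8)) * Real.exp (-((1:ℝ)/4) * t)) (Ioi 0) := hint2.add hint3
  have hmono : ∀ t ∈ Ioi (0:ℝ), t * Real.exp (-t) / ((x - t)^2 + y^2)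
      ≤ M * ((x - t)^2 + y^2)⁻¹ + ((4/x^2) * (t * Real.exp (-t))
          + (2/δ^2) * Real.exp (-(x/8)) * Real.exp (-((1:ℝ)/4) * t)) := by
    intro t ht
    have ht0 : (0:ℝ) < t := ht
    have hD : (0:ℝ) < (x - t)^2 + y^2 := by positivity
    have hte : 0 ≤ t * Real.exp (-t) := mul_nonneg ht0.le (Real.exp_pos _).le
    by_cases hnear : x - δ < t ∧ t < x + δ
    · have h1 : t * Real.exp (-t) ≤ M := by
        have := Real.exp_le_exp.2 (by linarith [hnear.1] : -t ≤ -(x - δ))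
        exact mul_le_mul (le_of_lt hnear.2) this (Real.exp_pos _).le (by linarith)
      have : t * Real.exp (-t) / ((x - t)^2 + y^2) ≤ M * ((x - t)^2 + y^2)⁻¹ := by
        rw [div_eq_mul_inv]
        exact mul_le_mul_of_nonneg_right h1 (inv_nonneg.2 hD.le)
      have hpos2 : 0 ≤ (4/x^2) * (t * Real.exp (-t)) := by positivity
      have hpos3 : 0 ≤ (2/δ^2) * Real.exp (-(x/8)) * Real.exp (-((1:ℝ)/4) * t) := by positivity
      linarith
    · have hfar : δ ≤ |x - t| := by
        rcases not_and_or.1 hnear with h | h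
        · push_neg at h; rw [abs_of_nonneg (by linarith)]; linarith
        · push_neg at h; rw [abs_of_nonpos (by linarith)]; linarith
      have hD2 : δ^2 ≤ (x - t)^2 := by
        calc δ^2 ≤ |x - t|^2 := by apply pow_le_pow_left₀ hδ.le hfar
          _ = (x - t)^2 := sq_abs _
      have hpos1 : 0 ≤ M * ((x - t)^2 + y^2)⁻¹ := mul_nonneg hMpos (inv_nonneg.2 hD.le)
      by_cases hhalf : t ≤ x/2
      · have hD3 : (x/2)^2 ≤ (x - t)^2 := by nlinarith
        have : t * Real.exp (-t) / ((x - t)^2 + y^2) ≤ (4/x^2) * (t * Real.exp (-t)) := by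
          rw [div_eq_mul_inv, mul_comm ((4:ℝ)/x^2) _]
          apply mul_le_mul_of_nonneg_left _ hte
          rw [show (4:ℝ)/x^2 = ((x/2)^2)⁻¹ by field_simp; ring]
          apply inv_anti₀ (by positivity) (by nlinarith [sq_nonneg y])
        have hpos3 : 0 ≤ (2/δ^2) * Real.exp (-(x/8)) * Real.exp (-((1:ℝ)/4) * t) := by positivity
        linarith
      · push_neg at hhalf
        have key : t * Real.exp (-t) / ((x - t)^2 + y^2)
            ≤ (2/δ^2) * Real.exp (-(x/8)) * Real.exp (-((1:ℝ)/4) * t) := by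
          have h1 : t * Real.exp (-t) / ((x - t)^2 + y^2) ≤ t * Real.exp (-t) / δ^2 := by
            apply div_le_div_of_nonneg_left hte (by positivity)
            nlinarith [sq_nonneg y]
          have h2 : t * Real.exp (-t) ≤ 2 * Real.exp (-((1:ℝ)/2) * t) := FGV_te_le t ht0.le
          have h3 : Real.exp (-((1:ℝ)/2) * t) = Real.exp (-((1:ℝ)/4) * t) * Real.exp (-((1:ℝ)/4) * t) := by
            rw [← Real.exp_add]; ring_nf
          have h4 : Real.exp (-((1:ℝ)/4) * t) ≤ Real.exp (-(x/8)) :=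
            Real.exp_le_exp.2 (by linarith)
          calc t * Real.exp (-t) / ((x - t)^2 + y^2) ≤ t * Real.exp (-t) / δ^2 := h1
            _ ≤ 2 * Real.exp (-((1:ℝ)/2) * t) / δ^2 := by
                apply div_le_div_of_nonneg_right h2 ?_ |>.trans_eq rfl
                positivity
            _ = (2/δ^2) * (Real.exp (-((1:ℝ)/4) * t) * Real.exp (-((1:ℝ)/4) * t)) := by
                rw [← h3]; ring
            _ ≤ (2/δ^2) * (Real.exp (-(x/8)) * Real.exp (-((1:ℝ)/4) * t)) := by
                apply mul_le_mul_of_nonneg_left _ (by positivity)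
                exact mul_le_mul_of_nonneg_right h4 (Real.exp_pos _).le
            _ = (2/δ^2) * Real.exp (-(x/8)) * Real.exp (-((1:ℝ)/4) * t) := by ring
        have hpos2 : 0 ≤ (4/x^2) * (t * Real.exp (-t)) := by positivity
        linarith
  calc (∫ t in Ioi (0:ℝ), t * Real.exp (-t) / ((x - t)^2 + y^2))
      ≤ ∫ t in Ioi (0:ℝ), (M * ((x - t)^2 + y^2)⁻¹ + ((4/x^2) * (t * Real.exp (-t))
          + (2/δ^2) * Real.exp (-(x/8)) * Real.exp (-((1:ℝ)/4) * t))) := by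
        exact setIntegral_mono_on (FGV_int_f x y hy) (hint1.add hint23)
          measurableSet_Ioi hmono
    _ = (∫ t in Ioi (0:ℝ), M * ((x - t)^2 + y^2)⁻¹)
        + ((∫ t in Ioi (0:ℝ), (4/x^2) * (t * Real.exp (-t)))
          + ∫ t in Ioi (0:ℝ), (2/δ^2) * Real.exp (-(x/8)) * Real.exp (-((1:ℝ)/4) * t)) := by
        rw [integral_add hint1 hint23, integral_add hint2 hint3]
    _ ≤ M * (π / y) + ((4/x^2) * 4 + (2/δ^2) * Real.exp (-(x/8)) * 4) := by
        gcongr ?_ + (?_ + ?_)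
        · rw [integral_const_mul]
          apply mul_le_mul_of_nonneg_left _ hMpos
          rw [← FGV_poisson_univ x y hy]
          refine setIntegral_le_integral (FGV_poisson_integrable x y hy) ?_
          filter_upwards with t using inv_nonneg.2 (by positivity)
        · rw [integral_const_mul]
          exact mul_le_mul_of_nonneg_left FGV_int_te_val (by positivity)
        · rw [integral_const_mul]
          apply mul_le_mul_of_nonneg_left _ (by positivity)
          have := integral_comp_mul_left_Ioi (fun s => Real.exp (-s)) 0 (by norm_num : (0:ℝ) < 1/4)
          simp only [mul_zero, smul_eq_mul] at this
          rw [show (fun t : ℝ => Real.exp (-(1/4:ℝ) * t)) = (fun t : ℝ => Real.exp (-(1/4 * t))) by ext t; ring_nf]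
          rw [this, integral_exp_neg_Ioi_zero]; norm_num
    _ = ((x + δ) * Real.exp (-(x - δ))) * (π / y) + 16/x^2 + 8*Real.exp (-(x/8))/δ^2 := by
        rw [hM]; ring

lemma FGV_tendsto_xe : Tendsto (fun x : ℝ => x * Real.exp (-x)) atTop (nhds 0) := by
  simpa using tendsto_pow_mul_exp_neg_atTop_nhds_zero 1

lemma FGV_tendsto_rho {l : ℝ} (hl : 0 < l) :
    Tendsto (fun x : ℝ => l * (x * Real.exp (-x))) atTop (nhds 0) := by
  simpa using (FGV_tendsto_xe.const_mul l)

lemma FGV_tendsto_div_rho_atTop {l : ℝ} (δ : ℝ) (hl : 0 < l) (hδ : 0 < δ) :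
    Tendsto (fun x : ℝ => δ / (l * (x * Real.exp (-x)))) atTop atTop := by
  have h1 : Tendsto (fun x : ℝ => l * (x * Real.exp (-x))) atTop (nhdsWithin 0 (Ioi 0)) := by
    refine tendsto_nhdsWithin_of_tendsto_nhds_of_eventually_within _ (FGV_tendsto_rho hl) ?_
    filter_upwards [eventually_gt_atTop (0:ℝ)] with x hx
    have : 0 < l * (x * Real.exp (-x)) := by positivity
    exact this
  have h2 : Tendsto (fun x : ℝ => (l * (x * Real.exp (-x)))⁻¹) atTop atTop :=
    h1.inv_tendsto_nhdsGT_zero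
  simpa [div_eq_mul_inv] using h2.const_mul_atTop hδ

lemma FGV_tendsto_arctan_rho {l : ℝ} (δ : ℝ) (hl : 0 < l) (hδ : 0 < δ) :
    Tendsto (fun x : ℝ => Real.arctan (δ / (l * (x * Real.exp (-x))))) atTop (nhds (π/2)) :=
  tendsto_nhds_of_tendsto_nhdsWithin
    (Real.tendsto_arctan_atTop.comp (FGV_tendsto_div_rho_atTop δ hl hδ))

lemma FGV_tendsto_ratio (δ : ℝ) : Tendsto (fun x : ℝ => (x + δ)/x) atTop (nhds 1) := by
  have h0 : Tendsto (fun x : ℝ => 1 + δ/x) atTop (nhds (1 + 0)) :=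
    tendsto_const_nhds.add (Tendsto.div_atTop tendsto_const_nhds tendsto_id)
  rw [add_zero] at h0
  refine h0.congr' ?_
  filter_upwards [eventually_gt_atTop (0:ℝ)] with x hx
  field_simp

lemma FGV_eventually_Fint_gt (α lam δ : ℝ) (hl : 0 < lam) (hδ : 0 < δ)
    (hgt : 1/α < Real.exp (-δ) * π / lam) :
    ∀ᶠ x in atTop, 1/α <
      ∫ t in Ioi (0:ℝ), t * Real.exp (-t) /
        ((x - t)^2 + (lam * (x * Real.exp (-x)))^2) := by
  set G : ℝ → ℝ := fun x =>
    (x + -δ)/x * Real.exp (-δ) * (2/lam * Real.arctan (δ / (lam * (x * Real.exp (-x)))))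
  have hG : Tendsto G atTop (nhds (1 * Real.exp (-δ) * (2/lam * (π/2)))) :=
    ((FGV_tendsto_ratio (-δ)).mul tendsto_const_nhds).mul
      (tendsto_const_nhds.mul (FGV_tendsto_arctan_rho δ hl hδ))
  have hval : 1 * Real.exp (-δ) * (2/lam * (π/2)) = Real.exp (-δ) * π / lam := by
    field_simp
  rw [hval] at hG
  filter_upwards [hG.eventually_const_lt hgt, eventually_gt_atTop (max δ 0)] with x hGx hx
  have hxδ : δ < x := lt_of_le_of_lt (le_max_left _ _) hx
  have hx0 : (0:ℝ) < x := lt_of_le_of_lt (le_max_right _ _) hx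
  have hρ : 0 < lam * (x * Real.exp (-x)) := by positivity
  refine lt_of_lt_of_le ?_ (FGV_Fint_lower x _ δ hρ hδ hxδ)
  have heq : ((x - δ) * Real.exp (-(x + δ))) *
      (2 / (lam * (x * Real.exp (-x))) * Real.arctan (δ / (lam * (x * Real.exp (-x))))) = G x := by
    have hE : Real.exp (-x) ≠ 0 := (Real.exp_pos _).ne'
    rw [show -(x + δ) = -x + -δ by ring, Real.exp_add]
    simp only [G]
    field_simp
    ring
  rw [heq]
  exact hGx

lemma FGV_eventually_Fint_lt (α lam δ : ℝ) (hl : 0 < lam) (hδ : 0 < δ)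
    (hlt : Real.exp δ * π / lam < 1/α) :
    ∀ᶠ x in atTop,
      (∫ t in Ioi (0:ℝ), t * Real.exp (-t) /
        ((x - t)^2 + (lam * (x * Real.exp (-x)))^2)) < 1/α := by
  set H : ℝ → ℝ := fun x =>
    (x + δ)/x * Real.exp δ * (π/lam) + 16/x^2 + 8*Real.exp (-(x/8))/δ^2
  have h2 : Tendsto (fun x : ℝ => 16/x^2) atTop (nhds 0) :=
    Tendsto.div_atTop tendsto_const_nhds (tendsto_pow_atTop two_ne_zero)
  have h3 : Tendsto (fun x : ℝ => 8*Real.exp (-(x/8))/δ^2) atTop (nhds (8*0/δ^2)) := by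
    apply Tendsto.div_const
    apply Tendsto.const_mul
    apply Real.tendsto_exp_atBot.comp
    have : Tendsto (fun x : ℝ => x/8) atTop atTop := Tendsto.atTop_div_const (by norm_num) tendsto_id
    exact tendsto_neg_atTop_atBot.comp this
  have hH : Tendsto H atTop (nhds (1 * Real.exp δ * (π/lam) + 0 + 8*0/δ^2)) :=
    ((((FGV_tendsto_ratio δ).mul tendsto_const_nhds).mul tendsto_const_nhds).add h2).add h3
  have hval : 1 * Real.exp δ * (π/lam) + 0 + 8*0/δ^2 = Real.exp δ * π / lam := by
    field_simp
    ring
  rw [hval] at hH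
  filter_upwards [hH.eventually_lt_const hlt, eventually_gt_atTop (max (2*δ) 0)] with x hHx hx
  have hxδ : 2*δ ≤ x := le_of_lt (lt_of_le_of_lt (le_max_left _ _) hx)
  have hx0 : (0:ℝ) < x := lt_of_le_of_lt (le_max_right _ _) hx
  have hρ : 0 < lam * (x * Real.exp (-x)) := by positivity
  refine lt_of_le_of_lt (le_trans (FGV_Fint_upper x _ δ hρ hδ hxδ) ?_) hHx
  have heq : ((x + δ) * Real.exp (-(x - δ))) * (π / (lam * (x * Real.exp (-x))))
      = (x + δ)/x * Real.exp δ * (π/lam) := by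
    have hE : Real.exp (-x) ≠ 0 := (Real.exp_pos _).ne'
    rw [show -(x - δ) = -x + δ by ring, Real.exp_add]
    field_simp
  simp only [H]
  rw [heq]

end FGVhelpers

/-- `lim_{x→∞} v_α(x)/(x e^{-x}) = απ`. -/
theorem free_gamma_v_asymptotics
    (α : ℝ) (hα : 0 < α) (c : ℝ) (hc : 0 < c)
    (hceq : (∫ t in Set.Ioi (0:ℝ), t * Real.exp (-t) / (c + t)^2) = 1/α)
    (v : ℝ → ℝ) (hv0 : ∀ x ≤ -c, v x = 0)
    (hvpos : ∀ x, -c < x → 0 < v x)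
    (hveq : ∀ x, -c < x → Fint x (v x) = 1/α)
    (hvuniq : ∀ x, -c < x → ∀ y, 0 < y → Fint x y = 1/α → y = v x) :
    Filter.Tendsto (fun x => v x / (x * Real.exp (-x))) Filter.atTop
      (nhds (α * Real.pi)) := by
  have hπ : (0:ℝ) < π := Real.pi_pos
  refine tendsto_order.2 ⟨?_, ?_⟩
  · intro a ha
    rcases le_or_gt a 0 with h0 | h0
    · filter_upwards [eventually_gt_atTop (max (-c) 0)] with x hx
      have hxc : -c < x := lt_of_le_of_lt (le_max_left _ _) hx
      have hx0 : (0:ℝ) < x := lt_of_le_of_lt (le_max_right _ _) hx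
      have h1 : 0 < v x / (x * Real.exp (-x)) :=
        div_pos (hvpos x hxc) (by positivity)
      linarith
    · set lam := (a + α*π)/2 with hlam
      have hla : a < lam := by rw [hlam]; linarith
      have hlp : lam < α*π := by rw [hlam]; linarith
      have hl0 : 0 < lam := by linarith
      set r := α*π/lam with hr
      have hr1 : 1 < r := (one_lt_div hl0).2 hlp
      have hr0 : 0 < r := by linarith
      set δ := Real.log r / 2 with hδdef
      have hlogr : 0 < Real.log r := Real.log_pos hr1
      have hδ : 0 < δ := by rw [hδdef]; linarith
      have hgt : 1/α < Real.exp (-δ) * π / lam := by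
        have h1 : Real.exp (-Real.log r) < Real.exp (-δ) :=
          Real.exp_lt_exp.2 (by rw [hδdef]; linarith)
        have h2 : Real.exp (-Real.log r) = r⁻¹ := by
          rw [Real.exp_neg, Real.exp_log hr0]
        have h3 : r⁻¹ * π / lam = 1/α := by
          rw [hr]; field_simp
        rw [← h3]
        apply div_lt_div_of_pos_right _ hl0
        rw [← h2]
        exact mul_lt_mul_of_pos_right h1 hπ
      filter_upwards [FGV_eventually_Fint_gt α lam δ hl0 hδ hgt,
        eventually_gt_atTop (max (-c) 0)] with x hF hx
      have hxc : -c < x := lt_of_le_of_lt (le_max_left _ _) hx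
      have hx0 : (0:ℝ) < x := lt_of_le_of_lt (le_max_right _ _) hx
      have hxe : 0 < x * Real.exp (-x) := by positivity
      have hvgt : lam * (x * Real.exp (-x)) < v x := by
        by_contra hcon
        push_neg at hcon
        have h1 : Fint x (lam * (x * Real.exp (-x))) ≤ Fint x (v x) :=
          FGV_Fint_anti x (hvpos x hxc) hcon
        rw [hveq x hxc] at h1
        have hF' : 1/α < Fint x (lam * (x * Real.exp (-x))) := hF
        exact absurd (lt_of_lt_of_le hF' h1) (lt_irrefl _)
      have : lam < v x / (x * Real.exp (-x)) := (lt_div_iff₀ hxe).2 (by linarith)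
      linarith
  · intro b hb
    set lam := (α*π + b)/2 with hlam
    have hla : α*π < lam := by rw [hlam]; linarith
    have hlb : lam < b := by rw [hlam]; linarith
    have hl0 : 0 < lam := by nlinarith
    set r := lam/(α*π) with hr
    have hr1 : 1 < r := (one_lt_div (by positivity)).2 hla
    have hr0 : 0 < r := by linarith
    set δ := Real.log r / 2 with hδdef
    have hlogr : 0 < Real.log r := Real.log_pos hr1
    have hδ : 0 < δ := by rw [hδdef]; linarith
    have hlt : Real.exp δ * π / lam < 1/α := by
      have h1 : Real.exp δ < Real.exp (Real.log r) :=
        Real.exp_lt_exp.2 (by rw [hδdef]; linarith)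
      have h2 : Real.exp (Real.log r) = r := Real.exp_log hr0
      have h3 : r * π / lam = 1/α := by
        rw [hr]; field_simp
      rw [← h3]
      apply div_lt_div_of_pos_right _ hl0
      rw [← h2]
      exact mul_lt_mul_of_pos_right h1 hπ
    filter_upwards [FGV_eventually_Fint_lt α lam δ hl0 hδ hlt,
      eventually_gt_atTop (max (-c) 0)] with x hF hx
    have hxc : -c < x := lt_of_le_of_lt (le_max_left _ _) hx
    have hx0 : (0:ℝ) < x := lt_of_le_of_lt (le_max_right _ _) hx
    have hxe : 0 < x * Real.exp (-x) := by positivity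
    have hρ : 0 < lam * (x * Real.exp (-x)) := by positivity
    have hvlt : v x < lam * (x * Real.exp (-x)) := by
      by_contra hcon
      push_neg at hcon
      have h1 : Fint x (v x) ≤ Fint x (lam * (x * Real.exp (-x))) :=
        FGV_Fint_anti x hρ hcon
      rw [hveq x hxc] at h1
      have hF' : Fint x (lam * (x * Real.exp (-x))) < 1/α := hF
      exact absurd (lt_of_le_of_lt h1 hF') (lt_irrefl _)
    have : v x / (x * Real.exp (-x)) < lam := (div_lt_iff₀ hxe).2 (by linarith)
    linarith
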